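/- Let $N\ge 2$ be an integer, $r>0$, and $V$ a real number with $r/N \le V < r$. Then there exists a unique $\alpha\in(0,1/r]$ such that $\frac{1-(1-\alpha r)^N}{N\alpha} = V$. -/

import Mathlib

theorem stmt_4 (N : ℕ) (hN : 2 ≤ N) (r V : ℝ) (hr : 0 < r)
    (hV1 : r / N ≤ V) (hV2 : V < r) :
    ∃! α : ℝ, α ∈ Set.Ioc 0 (1 / r) ∧ (1 - (1 - α * r) ^ N) / (N * α) = V := by
  have hN0 : (0:ℝ) < N := by
    have : 0 < N := by omega
    exact_mod_cast this
  set c : ℝ := N * V / r with hc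
  have hc1 : 1 ≤ c := by
    rw [hc, le_div_iff₀ hr]
    have h := (div_le_iff₀ hN0).mp hV1
    nlinarith
  have hc2 : c < N := by
    rw [hc, div_lt_iff₀ hr]
    nlinarith
  have key : ∀ β : ℝ, 0 < β →
      ((1 - (1 - β*r)^N)/(N*β) = V ↔ (∑ k ∈ Finset.range N, (1-β*r)^k) = c) := by
    intro β hβ
    have hgeo : 1 - (1-β*r)^N = (∑ k ∈ Finset.range N, (1-β*r)^k) * (β*r) := by
      linear_combination geom_sum_mul (1-β*r) N
    rw [hgeo, hc, div_eq_iff (by positivity), eq_div_iff hr.ne']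
    constructor
    · intro h
      have h2 : (∑ k ∈ Finset.range N, (1-β*r)^k) * r * β = N * V * β := by
        linear_combination h
      exact mul_right_cancel₀ hβ.ne' h2
    · intro h
      linear_combination β * h
  have hmono : ∀ a b : ℝ, 0 ≤ a → a < b →
      (∑ k ∈ Finset.range N, a^k) < ∑ k ∈ Finset.range N, b^k := by
    intro a b ha hab
    apply Finset.sum_lt_sum
    · intro k _
      exact pow_le_pow_left₀ ha hab.le k
    · exact ⟨1, Finset.mem_range.mpr (by omega), by simpa using hab⟩
  have hcont : ContinuousOn (fun t : ℝ => ∑ k ∈ Finset.range N, t^k) (Set.Icc 0 1) :=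
    (continuous_finset_sum _ fun k _ => continuous_pow k).continuousOn
  have h0 : ∑ k ∈ Finset.range N, (0:ℝ)^k = 1 := by
    rw [Finset.sum_eq_single 0]
    · simp
    · intro k _ hk; exact zero_pow hk
    · intro h; exact absurd (Finset.mem_range.mpr (by omega)) h
  have h1 : ∑ k ∈ Finset.range N, (1:ℝ)^k = N := by simp
  have hmem : c ∈ Set.Icc (∑ k ∈ Finset.range N, (0:ℝ)^k) (∑ k ∈ Finset.range N, (1:ℝ)^k) := by
    rw [h0, h1]; exact ⟨hc1, hc2.le⟩
  obtain ⟨t, htI, hgt⟩ := intermediate_value_Icc (by norm_num : (0:ℝ) ≤ 1) hcont hmem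
  simp only [] at hgt
  obtain ⟨ht0, ht1'⟩ := htI
  have ht1 : t < 1 := by
    rcases lt_or_eq_of_le ht1' with h | h
    · exact h
    · exfalso; rw [h, h1] at hgt; linarith
  have hα0 : 0 < (1-t)/r := div_pos (by linarith) hr
  refine ⟨(1-t)/r, ⟨⟨hα0, by gcongr; linarith⟩, ?_⟩, ?_⟩
  · rw [key _ hα0]
    have ht : 1 - (1-t)/r * r = t := by field_simp; ring
    rw [ht]; exact hgt
  · rintro β ⟨⟨hβ0, hβr⟩, hβeq⟩
    rw [key β hβ0] at hβeq
    have hbr : β * r ≤ 1 := by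
      have := (le_div_iff₀ hr).mp hβr
      linarith
    have hs0 : 0 ≤ 1 - β*r := by linarith
    have hst : 1 - β*r = t := by
      rcases lt_trichotomy (1 - β*r) t with h | h | h
      · exact absurd (hmono _ _ hs0 h) (by rw [hβeq, hgt]; exact lt_irrefl c)
      · exact h
      · exact absurd (hmono _ _ (by linarith) h) (by rw [hβeq, hgt]; exact lt_irrefl c)
    field_simp
    linarith [hst]
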